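/- Every Baire-comeager subset of [ω]^ω contains a perfect almost disjoint family: if C ⊆ [ω]^ω is comeager in some nonempty open set, then there is a perfect set P ⊆ C such that any two distinct elements of P have finite intersection. -/
import Mathlib

abbrev Cantor : Type := ℕ → Bool

def cset (x : Cantor) : Set ℕ := {n | x n = true}

namespace ADaux

/-- The basic clopen cylinder of a finite string. -/
def cyl (t : List Bool) : Set Cantor := {x | ∀ p < t.length, x p = t.getD p false}

lemma isOpen_cyl (t : List Bool) : IsOpen (cyl t) := by
  have : cyl t = ⋂ p ∈ Finset.range t.length, {x : Cantor | x p = t.getD p false} := by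
    ext x; simp [cyl]
  rw [this]
  refine isOpen_biInter_finset fun p _ => ?_
  have : {x : Cantor | x p = t.getD p false} = (fun x : Cantor => x p) ⁻¹' {t.getD p false} := by
    ext x; simp
  rw [this]
  exact (isOpen_discrete _).preimage (continuous_apply p)

/-- Every open set containing `x` contains the cylinder of some initial segment of `x`. -/
lemma exists_cyl_subset {V : Set Cantor} (hV : IsOpen V) {x : Cantor} (hx : x ∈ V) :
    ∃ N, ∀ y : Cantor, (∀ p < N, y p = x p) → y ∈ V := by
  obtain ⟨I, u, hIu, hsub⟩ := isOpen_pi_iff.1 hV x hx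
  rcases I.eq_empty_or_nonempty with h | h
  · exact ⟨0, fun y _ => hsub (by simp [h])⟩
  · refine ⟨(I.max' h) + 1, fun y hy => hsub ?_⟩
    intro a ha
    rw [hy a (Nat.lt_succ_of_le (I.le_max' a ha))]
    exact (hIu a ha).2

/-- Density: any string can be extended so the cylinder enters a given open set meeting it. -/
lemma exists_ext {V : Set Cantor} (hV : IsOpen V) {u : List Bool}
    (h : (V ∩ cyl u).Nonempty) : ∃ v : List Bool, cyl (u ++ v) ⊆ V := by
  obtain ⟨x, hxV, hxu⟩ := h
  obtain ⟨N, hN⟩ := exists_cyl_subset hV hxV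
  set M := max N u.length with hM
  refine ⟨(List.range (M - u.length)).map fun i => x (u.length + i), ?_⟩
  intro y hy
  apply hN
  intro p hp
  have hlen : (u ++ (List.range (M - u.length)).map fun i => x (u.length + i)).length = M := by
    simp [hM]
  have hp' : p < M := lt_of_lt_of_le hp (le_max_left _ _)
  have := hy p (by rw [hlen]; exact hp')
  rw [this]
  rcases lt_or_ge p u.length with hpu | hpu
  · rw [List.getD_append _ _ _ _ hpu]
    exact (hxu p hpu).symm
  · rw [List.getD_eq_getElem _ _ (by rw [hlen]; exact hp'),
      List.getElem_append_right (by omega)]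
    simp
    congr 1
    omega

/-! ### The tree construction -/

/-- Index of the `b`-child of node `j` in the binary-heap enumeration of the tree. -/
def child (j : ℕ) (b : Bool) : ℕ := 2 * j + cond b 2 1

lemma child_pos (j b) : 0 < child j b := by cases b <;> simp [child] <;> omega

lemma child_gt (j b) : j < child j b := by cases b <;> simp [child] <;> omega

lemma child_pred_div (j b) : (child j b - 1) / 2 = j := by cases b <;> simp [child] <;> omega

lemma child_mod (j b) : ((child j b) % 2 == 0) = b := by
  cases b <;> simp [child] <;> omega

lemma child_inj {j j' b b'} (h : child j b = child j' b') : j = j' ∧ b = b' := by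
  cases b <;> cases b' <;> simp [child] at h ⊢ <;> omega

/-- Level (depth) of node `k`. -/
def lvl : ℕ → ℕ
  | 0 => 0
  | k + 1 => lvl ((k + 1 - 1) / 2) + 1
decreasing_by omega

lemma lvl_child (j b) : lvl (child j b) = lvl j + 1 := by
  have h := child_pos j b
  obtain ⟨k, hk⟩ : ∃ k, child j b = k + 1 := ⟨child j b - 1, by omega⟩
  have h2 : (k + 1 - 1) / 2 = j := by rw [← hk]; exact child_pred_div j b
  rw [hk, lvl, h2]

section Construction

variable (root : List Bool) (ext : ℕ → List Bool → List Bool)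

/-- The string assigned to node `k`. -/
def A : ℕ → List Bool
  | 0 => root
  | k + 1 =>
    let j := (k + 1 - 1) / 2
    let u := A j ++ ((k + 1) % 2 == 0) ::
      List.replicate ((A k).length - (A j).length) false
    u ++ ext (lvl j) u
decreasing_by all_goals omega

lemma getD_of_prefix {l l' : List Bool} (h : l <+: l') {p : ℕ} (hp : p < l.length) :
    l'.getD p false = l.getD p false := by
  rw [List.getD_eq_getElem _ _ hp, List.getD_eq_getElem _ _ (hp.trans_le h.length_le),
    h.getElem hp]

lemma A_child_eq (j : ℕ) (b : Bool) :
    A root ext (child j b) =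
      (A root ext j ++ b ::
        List.replicate ((A root ext (child j b - 1)).length - (A root ext j).length) false)
      ++ ext (lvl j) (A root ext j ++ b ::
        List.replicate ((A root ext (child j b - 1)).length - (A root ext j).length) false) := by
  have h := child_pos j b
  obtain ⟨k, hk⟩ : ∃ k, child j b = k + 1 := ⟨child j b - 1, by omega⟩
  have h2 : (k + 1 - 1) / 2 = j := by rw [← hk]; exact child_pred_div j b
  have h3 : ((k + 1) % 2 == 0) = b := by rw [← hk]; exact child_mod j b
  rw [hk, A]
  simp only [Nat.add_sub_cancel] at h2 ⊢
  rw [h2, h3]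

lemma lenA_succ (k : ℕ) : (A root ext k).length < (A root ext (k + 1)).length := by
  induction k using Nat.strong_induction_on with
  | _ k IH =>
    have mono : ∀ j, j ≤ k → ∀ i, i ≤ j → (A root ext i).length ≤ (A root ext j).length := by
      intro j
      induction j with
      | zero => intro _ i hi; have hi0 : i = 0 := by omega
                subst hi0; exact le_rfl
      | succ m ihm =>
        intro hjk i hi
        rcases Nat.lt_or_ge i (m + 1) with h | h
        · exact le_trans (ihm (by omega) i (by omega)) (le_of_lt (IH m (by omega)))
        · have : i = m + 1 := by omega
          subst this; exact le_rfl
    have hdiv : (A root ext ((k + 1 - 1) / 2)).length ≤ (A root ext k).length :=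
      mono k le_rfl _ (by omega)
    rw [A]
    simp only [List.length_append, List.length_cons, List.length_replicate]
    omega

lemma lenA_mono {i j : ℕ} (h : i ≤ j) : (A root ext i).length ≤ (A root ext j).length := by
  induction j with
  | zero => have hi0 : i = 0 := by omega
            subst hi0; exact le_rfl
  | succ m ihm =>
    rcases Nat.lt_or_ge i (m + 1) with h' | h'
    · exact le_trans (ihm (by omega)) (le_of_lt (lenA_succ root ext m))
    · have : i = m + 1 := by omega
      subst this; exact le_rfl

lemma lenA_strict_mono {i j : ℕ} (h : i < j) :
    (A root ext i).length < (A root ext j).length :=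
  lt_of_lt_of_le (lenA_succ root ext i) (lenA_mono root ext h)

lemma lenA_ge (k : ℕ) : k ≤ (A root ext k).length := by
  induction k with
  | zero => exact Nat.zero_le _
  | succ m ihm => have := lenA_succ root ext m; omega

lemma A_child_prefix (j : ℕ) (b : Bool) :
    (A root ext j ++ [b]) <+: A root ext (child j b) := by
  rw [A_child_eq]
  refine List.IsPrefix.trans ?_ (List.prefix_append _ _)
  exact ⟨List.replicate ((A root ext (child j b - 1)).length - (A root ext j).length) false,
    by simp⟩

/-- Any `true` bit of `A (child j b)` strictly beyond `|A j|` lies beyond `|A (child j b - 1)|`: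
the padding region consists of `false`s. -/
lemma A_child_ones (j : ℕ) (b : Bool) (p : ℕ)
    (h1 : (A root ext j).length < p)
    (h2 : (A root ext (child j b)).getD p false = true) :
    (A root ext (child j b - 1)).length < p := by
  by_contra hcon
  push_neg at hcon
  set L := (A root ext (child j b - 1)).length - (A root ext j).length with hL
  have hjle : (A root ext j).length ≤ (A root ext (child j b - 1)).length :=
    lenA_mono root ext (by have := child_gt j b; omega)
  have hpu : p < (A root ext j ++ b :: List.replicate L false).length := by
    simp [hL]; omega
  rw [A_child_eq, List.getD_append _ _ _ _ hpu,
    List.getD_append_right _ _ _ _ (by omega)] at h2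
  obtain ⟨q, hq⟩ : ∃ q, p - (A root ext j).length = q + 1 := ⟨p - (A root ext j).length - 1, by omega⟩
  rw [hq] at h2
  simp only [List.getD_cons_succ] at h2
  have : (List.replicate L false).getD q false = false := by
    rcases Nat.lt_or_ge q L with h | h
    · rw [List.getD_eq_getElem _ _ (by simpa using h)]; simp
    · rw [List.getD_eq_default _ _ (by simpa using h)]
  rw [this] at h2
  exact Bool.false_ne_true h2

end Construction

/-- Indices of the nodes along branch `a`. -/
def ix (a : Cantor) : ℕ → ℕ
  | 0 => 0
  | n + 1 => child (ix a n) (a n)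

lemma ix_lt (a : Cantor) (n : ℕ) : ix a n < ix a (n + 1) := child_gt _ _

lemma ix_ge (a : Cantor) (n : ℕ) : n ≤ ix a n := by
  induction n with
  | zero => exact le_rfl
  | succ m ih => have := ix_lt a m; omega

lemma ix_mono (a : Cantor) {n m : ℕ} (h : n ≤ m) : ix a n ≤ ix a m := by
  induction m with
  | zero => have : n = 0 := by omega
            subst this; exact le_rfl
  | succ l ih =>
    rcases Nat.lt_or_ge n (l + 1) with h' | h'
    · exact le_trans (ih (by omega)) (le_of_lt (ix_lt a l))
    · have : n = l + 1 := by omega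
      subst this; exact le_rfl

lemma lvl_ix (a : Cantor) (n : ℕ) : lvl (ix a n) = n := by
  induction n with
  | zero => simp [ix, lvl]
  | succ m ih => rw [ix, lvl_child, ih]

lemma ix_congr {a b : Cantor} {n : ℕ} (h : ∀ i < n, a i = b i) : ix a n = ix b n := by
  induction n with
  | zero => rfl
  | succ m ih => rw [ix, ix, ih (fun i hi => h i (by omega)), h m (by omega)]

lemma ix_eq_imp {a b : Cantor} {n : ℕ} (h : ix a n = ix b n) : ∀ i < n, a i = b i := by
  induction n with
  | zero => intro i hi; omega
  | succ m ih =>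
    rw [ix, ix] at h
    obtain ⟨h1, h2⟩ := child_inj h
    intro i hi
    rcases Nat.lt_or_ge i m with h' | h'
    · exact ih h1 i h'
    · have : i = m := by omega
      subst this; exact h2

section Branch

variable (root : List Bool) (ext : ℕ → List Bool → List Bool)

/-- The branch map `2^ω → 2^ω` induced by the scheme. -/
def brA (a : Cantor) : Cantor := fun p => (A root ext (ix a (p + 1))).getD p false

lemma A_ix_prefix (a : Cantor) {n m : ℕ} (h : n ≤ m) :
    A root ext (ix a n) <+: A root ext (ix a m) := by
  induction m, h using Nat.le_induction with
  | base => exact List.prefix_refl _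
  | succ m hm ih =>
    refine ih.trans ?_
    have : A root ext (ix a m) <+: (A root ext (ix a m) ++ [a m]) := List.prefix_append _ _
    refine this.trans ?_
    rw [ix]
    exact A_child_prefix root ext _ _

lemma brA_eq (a : Cantor) (n p : ℕ) (hp : p < (A root ext (ix a n)).length) :
    brA root ext a p = (A root ext (ix a n)).getD p false := by
  unfold brA
  rcases le_total n (p + 1) with h | h
  · exact getD_of_prefix (A_ix_prefix root ext a h) hp
  · refine (getD_of_prefix (A_ix_prefix root ext a h) ?_).symm
    have h1 := lenA_ge root ext (ix a (p + 1))
    have h2 := ix_ge a (p + 1)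
    omega

lemma brA_mem_cyl (a : Cantor) (n : ℕ) : brA root ext a ∈ cyl (A root ext (ix a n)) :=
  fun p hp => brA_eq root ext a n p hp

lemma brA_split (a : Cantor) (n : ℕ) :
    brA root ext a ((A root ext (ix a n)).length) = a n := by
  have hlt : (A root ext (ix a n)).length < (A root ext (ix a (n + 1))).length :=
    lenA_strict_mono root ext (ix_lt a n)
  rw [brA_eq root ext a (n + 1) _ hlt]
  have hpre : (A root ext (ix a n) ++ [a n]) <+: A root ext (ix a (n + 1)) := by
    rw [ix]; exact A_child_prefix root ext _ _
  rw [getD_of_prefix hpre (by simp)]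
  rw [List.getD_append_right _ _ _ _ le_rfl]
  simp

lemma brA_agree {a b : Cantor} {N : ℕ} (h : ∀ i < N, a i = b i) :
    ∀ p < N, brA root ext a p = brA root ext b p := by
  intro p hp
  unfold brA
  rw [ix_congr (fun i hi => h i (by omega))]

lemma brA_inj {a b : Cantor} (h : a ≠ b) : brA root ext a ≠ brA root ext b := by
  have hex : ∃ n, a n ≠ b n := Function.ne_iff.1 h
  have h1 : a (Nat.find hex) ≠ b (Nat.find hex) := Nat.find_spec hex
  have h2 : ∀ i < Nat.find hex, a i = b i := fun i hi => not_not.1 (Nat.find_min hex hi)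
  have hij : ix a (Nat.find hex) = ix b (Nat.find hex) := ix_congr h2
  intro hcon
  apply h1
  have ha := brA_split root ext a (Nat.find hex)
  have hb := brA_split root ext b (Nat.find hex)
  rw [← ha, ← hb, hij, hcon]

lemma ones_loc (a : Cantor) {n p : ℕ}
    (hp : (A root ext (ix a n)).length < p) (ht : brA root ext a p = true) :
    ∃ m, n < m ∧ (A root ext (ix a m - 1)).length < p ∧ p ≤ (A root ext (ix a m)).length := by
  have hex : ∃ t, p ≤ (A root ext (ix a (n + t + 1))).length := by
    refine ⟨p, ?_⟩
    have h1 := lenA_ge root ext (ix a (n + p + 1))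
    have h2 := ix_ge a (n + p + 1)
    omega
  set t := Nat.find hex with hT
  have h1 : p ≤ (A root ext (ix a (n + t + 1))).length := Nat.find_spec hex
  have h2 : (A root ext (ix a (n + t))).length < p := by
    rcases Nat.eq_zero_or_pos t with h0 | h0
    · rw [h0]; simpa using hp
    · have := Nat.find_min hex (show t - 1 < t by omega)
      have heq : n + (t - 1) + 1 = n + t := by omega
      rw [heq] at this
      omega
  have hix1 : 1 ≤ ix a (n + t + 1) := le_trans (by omega) (ix_ge a (n + t + 1))
  rcases eq_or_lt_of_le h1 with heq | hlt
  · refine ⟨n + t + 1, by omega, ?_, le_of_eq heq⟩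
    have := lenA_strict_mono root ext (show ix a (n + t + 1) - 1 < ix a (n + t + 1) by omega)
    omega
  · have hval : (A root ext (ix a (n + t + 1))).getD p false = true := by
      rw [← brA_eq root ext a (n + t + 1) p hlt]; exact ht
    have hones : (A root ext (child (ix a (n + t)) (a (n + t)) - 1)).length < p := by
      refine A_child_ones root ext _ _ _ h2 ?_
      rw [← ix]; exact hval
    rw [← ix] at hones
    exact ⟨n + t + 1, by omega, hones, le_of_lt hlt⟩

lemma isOpen_agree (x : Cantor) (N : ℕ) : IsOpen {y : Cantor | ∀ p < N, y p = x p} := by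
  have : {y : Cantor | ∀ p < N, y p = x p}
      = ⋂ p ∈ Finset.range N, {y : Cantor | y p = x p} := by
    ext y; simp
  rw [this]
  refine isOpen_biInter_finset fun p _ => ?_
  have : {y : Cantor | y p = x p} = (fun y : Cantor => y p) ⁻¹' {x p} := by ext y; simp
  rw [this]
  exact (isOpen_discrete _).preimage (continuous_apply p)

lemma brA_continuous : Continuous (brA root ext) := by
  rw [continuous_iff_continuousAt]
  intro a
  rw [ContinuousAt, Filter.tendsto_def]
  intro V hV
  obtain ⟨W, hWV, hWo, hWx⟩ := mem_nhds_iff.1 hV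
  obtain ⟨N, hN⟩ := exists_cyl_subset hWo hWx
  rw [mem_nhds_iff]
  refine ⟨{y : Cantor | ∀ p < N, y p = a p}, ?_, isOpen_agree a N, fun p _ => rfl⟩
  intro y hy
  refine hWV (hN _ ?_)
  intro p hp
  exact brA_agree root ext (fun i hi => hy i hi) p hp

lemma brA_ad {a b : Cantor} (h : a ≠ b) :
    (cset (brA root ext a) ∩ cset (brA root ext b)).Finite := by
  have hex : ∃ n, a n ≠ b n := Function.ne_iff.1 h
  set n := Nat.find hex with hn
  have h1 : a n ≠ b n := Nat.find_spec hex
  have h2 : ∀ i < n, a i = b i := fun i hi => not_not.1 (Nat.find_min hex hi)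
  have hij : ix a n = ix b n := ix_congr h2
  refine Set.Finite.subset (Set.finite_Iic ((A root ext (ix a n)).length)) ?_
  rintro p ⟨hpa, hpb⟩
  simp only [Set.mem_Iic]
  by_contra hgt
  push_neg at hgt
  have hta : brA root ext a p = true := hpa
  have htb : brA root ext b p = true := hpb
  have hgtb : (A root ext (ix b n)).length < p := by rw [← hij]; exact hgt
  obtain ⟨m, hnm, hma, hma2⟩ := ones_loc root ext a hgt hta
  obtain ⟨m', hnm', hmb, hmb2⟩ := ones_loc root ext b hgtb htb
  have hese : ix a m = ix b m' := by
    rcases lt_trichotomy (ix a m) (ix b m') with hlt | heq | hlt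
    · exfalso
      have : (A root ext (ix a m)).length ≤ (A root ext (ix b m' - 1)).length :=
        lenA_mono root ext (by omega)
      omega
    · exact heq
    · exfalso
      have : (A root ext (ix b m')).length ≤ (A root ext (ix a m - 1)).length :=
        lenA_mono root ext (by omega)
      omega
  have hmm : m = m' := by
    have e1 := lvl_ix a m
    have e2 := lvl_ix b m'
    rw [hese] at e1
    omega
  subst hmm
  exact h1 (ix_eq_imp hese n hnm)

end Branch

end ADaux

open ADaux

/-- Every subset of `[ω]^ω` comeager in some nonempty open set contains a perfect almost
disjoint family. -/
theorem comeager_contains_perfect_ad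
    (C : Set Cantor) (hC : ∀ x ∈ C, (cset x).Infinite)
    (U : Set Cantor) (hU : IsOpen U) (hne : U.Nonempty)
    (hcom : IsMeagre (U \ C)) :
    ∃ P : Set Cantor, P ⊆ C ∧ P.Nonempty ∧ Perfect P ∧
      ∀ x ∈ P, ∀ y ∈ P, x ≠ y → (cset x ∩ cset y).Finite := by
  -- extract a countable family of dense open sets witnessing meagerness
  have hres : (U \ C)ᶜ ∈ residual Cantor := hcom
  rw [mem_residual_iff] at hres
  obtain ⟨S, hSo, hSd, hSc, hSsub⟩ := hres
  obtain ⟨D, hDo, hDd, hDsub⟩ : ∃ D : ℕ → Set Cantor,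
      (∀ n, IsOpen (D n)) ∧ (∀ n, Dense (D n)) ∧ (⋂ n, D n) ⊆ (U \ C)ᶜ := by
    rcases S.eq_empty_or_nonempty with h | h
    · refine ⟨fun _ => Set.univ, fun _ => isOpen_univ, fun _ => dense_univ, ?_⟩
      refine subset_trans ?_ hSsub
      simp [h]
    · obtain ⟨g, hg⟩ := Set.Countable.exists_eq_range hSc h
      refine ⟨g, fun n => hSo _ (by rw [hg]; exact Set.mem_range_self n),
        fun n => hSd _ (by rw [hg]; exact Set.mem_range_self n), ?_⟩
      refine subset_trans ?_ hSsub
      rw [hg, Set.sInter_range]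
  -- extension function into the dense open sets
  have hext0 : ∀ (n : ℕ) (u : List Bool), ∃ v : List Bool, cyl (u ++ v) ⊆ D n := by
    intro n u
    refine exists_ext (hDo n) ?_
    have hcyl : (cyl u).Nonempty := ⟨fun p => u.getD p false, fun p _ => rfl⟩
    obtain ⟨x, hx1, hx2⟩ := (hDd n).exists_mem_open (isOpen_cyl u) hcyl
    exact ⟨x, hx1, hx2⟩
  choose extf hextf using hext0
  -- root string
  obtain ⟨x0, hx0⟩ := hne
  obtain ⟨N0, hN0⟩ := exists_cyl_subset hU hx0
  set root : List Bool := (List.range N0).map x0 with hroot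
  have hrootsub : cyl root ⊆ U := by
    intro y hy
    apply hN0
    intro p hp
    have hlen : root.length = N0 := by simp [hroot]
    have := hy p (by rw [hlen]; exact hp)
    rw [this, List.getD_eq_getElem _ _ (by rw [hlen]; exact hp)]
    simp [hroot]
  set f := brA root extf with hf
  have hmemcyl : ∀ (a : Cantor) (n : ℕ), f a ∈ cyl (A root extf (ix a n)) :=
    fun a n => brA_mem_cyl root extf a n
  have hfU : ∀ a, f a ∈ U := by
    intro a
    have h0 := hmemcyl a 0
    have e1 : ix a 0 = 0 := rfl
    have e2 : A root extf 0 = root := by rw [A]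
    rw [e1, e2] at h0
    exact hrootsub h0
  have hfD : ∀ a n, f a ∈ D n := by
    intro a n
    have hcylsub : cyl (A root extf (ix a (n + 1))) ⊆ D n := by
      intro y hy
      rw [ix, A_child_eq, lvl_ix] at hy
      exact hextf n _ hy
    exact hcylsub (hmemcyl a (n + 1))
  have hfC : ∀ a, f a ∈ C := by
    intro a
    by_contra hc
    exact (hDsub (Set.mem_iInter.2 (hfD a))) ⟨hfU a, hc⟩
  refine ⟨Set.range f, ?_, ⟨f (fun _ => false), Set.mem_range_self _⟩, ⟨?_, ?_⟩, ?_⟩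
  · rintro x ⟨a, rfl⟩
    exact hfC a
  · exact (isCompact_range (brA_continuous root extf)).isClosed
  · rintro x ⟨a, rfl⟩
    rw [accPt_iff_nhds]
    intro V hV
    obtain ⟨W, hWV, hWo, hWx⟩ := mem_nhds_iff.1 hV
    obtain ⟨N, hN⟩ := exists_cyl_subset hWo hWx
    set a' := Function.update a N (!(a N)) with ha'
    have hne' : a' ≠ a := by
      intro hcon
      have : a' N = a N := congrFun hcon N
      rw [ha', Function.update_self] at this
      simp at this
    refine ⟨f a', ⟨hWV (hN _ ?_), Set.mem_range_self _⟩, brA_inj root extf hne'⟩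
    intro p hp
    refine brA_agree root extf (fun i hi => ?_) p hp
    rw [ha', Function.update_of_ne (by omega)]
  · rintro x ⟨a, rfl⟩ y ⟨b, rfl⟩ hxy
    have hab : a ≠ b := fun hcon => hxy (by rw [hcon])
    exact brA_ad root extf hab
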